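/- For |z| < π/2, z·tan z = Σ_{n≥1} (-1)^n 4^n (1 - 4^n) B_{2n} z^{2n}/(2n)!, where B_k are the Bernoulli numbers. -/

import Mathlib

open Real

lemma bern_bound (k : ℕ) (hk : k ≠ 0) :
    |(bernoulli (2 * k) : ℝ)| * (2 * π) ^ (2 * k) ≤ 4 * (Nat.factorial (2 * k) : ℝ) := by
  have hS := hasSum_zeta_nat hk
  set S : ℝ := (-1 : ℝ) ^ (k + 1) * (2 : ℝ) ^ (2 * k - 1) * π ^ (2 * k) *
      bernoulli (2 * k) / (Nat.factorial (2 * k) : ℝ) with hSdef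
  have hS0 : 0 ≤ S := hS.nonneg fun n => by positivity
  have hS2 : S ≤ 2 := by
    have hle : S ≤ π ^ 2 / 6 := hasSum_le (fun n => by
      rcases Nat.eq_zero_or_pos n with h | h
      · simp [h, zero_pow (by omega : 2*k ≠ 0)]
      · apply one_div_le_one_div_of_le
        · positivity
        · calc ((n : ℝ)) ^ 2 = (n : ℝ) ^ (2 * 1) := by norm_num
            _ ≤ (n : ℝ) ^ (2 * k) := by
              apply pow_le_pow_right₀ (by exact_mod_cast h)
              omega) hS hasSum_zeta_two
    have : π ^ 2 / 6 ≤ 2 := by nlinarith [pi_lt_d2, pi_pos]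
    linarith
  have habs : |S| = (2 : ℝ) ^ (2 * k - 1) * π ^ (2 * k) * |(bernoulli (2 * k) : ℝ)| / (Nat.factorial (2 * k) : ℝ) := by
    rw [hSdef, abs_div, abs_mul, abs_mul, abs_mul, abs_pow, abs_pow, abs_pow, abs_neg, abs_one,
      one_pow, one_mul, abs_two, abs_of_pos pi_pos, Nat.abs_cast]
  have hfac : (0:ℝ) < (Nat.factorial (2 * k) : ℝ) := by exact_mod_cast Nat.factorial_pos _
  have h1 : (2 : ℝ) ^ (2 * k - 1) * π ^ (2 * k) * |(bernoulli (2 * k) : ℝ)| ≤ 2 * (Nat.factorial (2 * k) : ℝ) := by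
    have := habs ▸ (abs_of_nonneg hS0) ▸ hS2
    rw [div_le_iff₀ hfac] at this
    linarith
  have h2 : (2 * π) ^ (2 * k) = 2 * ((2:ℝ) ^ (2 * k - 1) * π ^ (2 * k)) := by
    rw [mul_pow, ← mul_assoc]
    congr 1
    rw [← pow_succ']
    congr 1
    omega
  calc |(bernoulli (2 * k) : ℝ)| * (2 * π) ^ (2 * k)
      = 2 * ((2:ℝ) ^ (2 * k - 1) * π ^ (2 * k) * |(bernoulli (2 * k) : ℝ)|) := by rw [h2]; ring
    _ ≤ 2 * (2 * (Nat.factorial (2 * k) : ℝ)) := by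
        apply mul_le_mul_of_nonneg_left h1 (by norm_num)
    _ = 4 * (Nat.factorial (2 * k) : ℝ) := by ring

lemma bern_term_norm (w : ℂ) (n : ℕ) :
    ‖(bernoulli n : ℂ) * w ^ n / (Nat.factorial n : ℂ)‖
      = |(bernoulli n : ℝ)| * ‖w‖ ^ n / (Nat.factorial n : ℝ) := by
  rw [norm_div, norm_mul, norm_pow]
  norm_cast

lemma bern_summable (w : ℂ) (hw : ‖w‖ < 2 * π) :
    Summable (fun n => ‖(bernoulli n : ℂ) * w ^ n / (Nat.factorial n : ℂ)‖) := by
  have hq0 : 0 ≤ ‖w‖ / (2 * π) := by positivity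
  have hq1 : ‖w‖ / (2 * π) < 1 := (div_lt_one (by positivity)).2 hw
  refine Summable.of_nonneg_of_le (fun n => norm_nonneg _) (fun n => ?_)
    ((summable_geometric_of_lt_one hq0 hq1).mul_left 4)
  rw [bern_term_norm, div_pow, ← mul_div_assoc]
  have hfac : (0:ℝ) < (Nat.factorial n : ℝ) := by exact_mod_cast Nat.factorial_pos _
  have h2pi : (0:ℝ) < (2*π) ^ n := by positivity
  rw [div_le_div_iff₀ hfac h2pi]
  have hwn : (0:ℝ) ≤ ‖w‖ ^ n := by positivity
  rcases Nat.even_or_odd n with he | ho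
  · obtain ⟨k, hk0⟩ := he
    have hk : n = 2 * k := by omega
    subst hk
    rcases Nat.eq_zero_or_pos k with h0 | h0
    · subst h0; norm_num
    · have hb := bern_bound k (by omega)
      nlinarith [mul_le_mul_of_nonneg_right hb hwn]
  · rcases Nat.lt_or_ge n 2 with h2 | h2
    · interval_cases n
      · norm_num
      · rw [bernoulli_one]
        have h4 : π ≤ 4 := by nlinarith [pi_lt_d2]
        have : |((-1/2 : ℚ) : ℝ)| = 1/2 := by norm_num
        rw [this]
        simp only [pow_one, Nat.factorial_one, Nat.cast_one]
        nlinarith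
    · have hb : bernoulli n = 0 := by
        rw [bernoulli_eq_bernoulli'_of_ne_one (by omega)]
        exact bernoulli'_eq_zero_of_odd ho (by omega)
      rw [hb]
      simp only [Rat.cast_zero, abs_zero, zero_mul]
      nlinarith

lemma bern_tsum_mul (w : ℂ) (hw : ‖w‖ < 2 * π) :
    (∑' n : ℕ, (bernoulli n : ℂ) * w ^ n / (Nat.factorial n : ℂ)) * (Complex.exp w - 1) = w := by
  set A : ℕ → ℂ := fun n => (bernoulli n : ℂ) * w ^ n / (Nat.factorial n : ℂ) with hAdef
  set B : ℕ → ℂ := fun n => if n = 0 then 0 else w ^ n / (Nat.factorial n : ℂ) with hBdef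
  have hA : Summable fun n => ‖A n‖ := bern_summable w hw
  have hexp : HasSum (fun n => w ^ n / (Nat.factorial n : ℂ)) (Complex.exp w) := by
    have h := NormedSpace.expSeries_div_hasSum_exp w
    rwa [← Complex.exp_eq_exp_ℂ] at h
  have hB : HasSum B (Complex.exp w - 1) := by
    have h2 := hexp.update 0 0
    have he : Function.update (fun n => w ^ n / (Nat.factorial n : ℂ)) 0 0 = B := by
      funext n
      rw [Function.update_apply, hBdef]
    rw [he] at h2
    simpa [sub_eq_add_neg, add_comm] using h2
  have hBnorm : Summable fun n => ‖B n‖ := by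
    refine Summable.of_nonneg_of_le (fun n => norm_nonneg _) (fun n => ?_)
      (Real.summable_pow_div_factorial ‖w‖)
    rw [hBdef]
    dsimp only
    split_ifs with h
    · simp; positivity
    · rw [norm_div, norm_pow, Complex.norm_natCast]
  have key := tsum_mul_tsum_eq_tsum_sum_antidiagonal_of_summable_norm hA hBnorm
  rw [hB.tsum_eq] at key
  rw [key]
  have hco : ∀ n : ℕ, (∑ p ∈ Finset.HasAntidiagonal.antidiagonal n, A p.1 * B p.2)
      = ((PowerSeries.coeff n (PowerSeries.X) : ℚ) : ℂ) * w ^ n := by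
    intro n
    rw [← bernoulliPowerSeries_mul_exp_sub_one ℚ, PowerSeries.coeff_mul]
    push_cast
    rw [Finset.sum_mul]
    apply Finset.sum_congr rfl
    intro p hp
    have hpn : p.1 + p.2 = n := Finset.HasAntidiagonal.mem_antidiagonal.mp hp
    have hc1 : (PowerSeries.coeff p.1) (bernoulliPowerSeries ℚ) = bernoulli p.1 / (Nat.factorial p.1 : ℚ) := by
      simp [bernoulliPowerSeries, PowerSeries.coeff_mk]
    have hc2 : (PowerSeries.coeff p.2) (PowerSeries.exp ℚ - 1)
        = (if p.2 = 0 then 0 else 1 / (Nat.factorial p.2 : ℚ)) := by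
      rw [map_sub, PowerSeries.coeff_exp, PowerSeries.coeff_one]
      split_ifs with h
      · rw [h]; simp
      · simp
    rw [hc1, hc2, ← hpn, pow_add]
    rw [hAdef, hBdef]
    dsimp only
    split_ifs with h
    · simp
    · have h1 : (Nat.factorial p.1 : ℂ) ≠ 0 := Nat.cast_ne_zero.2 (Nat.factorial_ne_zero _)
      have h2 : (Nat.factorial p.2 : ℂ) ≠ 0 := Nat.cast_ne_zero.2 (Nat.factorial_ne_zero _)
      push_cast
      field_simp
  simp_rw [hco, PowerSeries.coeff_X]
  rw [tsum_eq_single 1 (fun n hn => by rw [if_neg hn]; simp)]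
  simp

theorem stmt_8 (z : ℂ) (hz : ‖z‖ < π / 2) :
    z * Complex.tan z = ∑' n : ℕ,
      (-1) ^ (n + 1) * 4 ^ (n + 1) * (1 - 4 ^ (n + 1)) * (bernoulli (2 * (n + 1)) : ℂ) *
        z ^ (2 * (n + 1)) / (Nat.factorial (2 * (n + 1)) : ℂ) := by
  rcases eq_or_ne z 0 with rfl | hz0
  · simp [zero_pow, Nat.mul_ne_zero]
  have hzn : ‖z‖ = ‖z‖ := rfl
  have hpi : (0:ℝ) < π := pi_pos
  have habs : (0:ℝ) < ‖z‖ := by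
    simpa [norm_pos_iff] using hz0
  set w₁ : ℂ := 2 * Complex.I * z with hw1def
  set w₂ : ℂ := 4 * Complex.I * z with hw2def
  have hnw1 : ‖w₁‖ = 2 * ‖z‖ := by
    rw [hw1def, norm_mul, norm_mul, Complex.norm_I]; simp
  have hnw2 : ‖w₂‖ = 4 * ‖z‖ := by
    rw [hw2def, norm_mul, norm_mul, Complex.norm_I]; norm_num
  have hw1 : ‖w₁‖ < 2 * π := by rw [hnw1, hzn]; nlinarith
  have hw2 : ‖w₂‖ < 2 * π := by rw [hnw2, hzn]; nlinarith
  set u : ℂ := Complex.exp w₁ with hudef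
  have hu1 : u ≠ 1 := by
    intro h
    rw [hudef, Complex.exp_eq_one_iff] at h
    obtain ⟨n, hn⟩ := h
    have hz' : z = (n : ℂ) * π := by
      have h2 : (2 * Complex.I) * z = (2 * Complex.I) * ((n:ℂ) * π) := by
        rw [hw1def] at hn; linear_combination hn
      exact mul_left_cancel₀ (by simp [Complex.I_ne_zero] : (2 * Complex.I) ≠ 0) h2
    have : ‖z‖ = |(n:ℝ)| * π := by
      rw [hz']
      simp [norm_mul, abs_of_pos hpi]
    rcases eq_or_ne n 0 with rfl | hn0
    · apply hz0; rw [hz']; simp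
    · have : (1:ℝ) * π ≤ |(n:ℝ)| * π := by
        apply mul_le_mul_of_nonneg_right _ (le_of_lt hpi)
        rw [← Int.cast_abs]
        exact_mod_cast Int.one_le_abs hn0
      linarith [hz, ‹‖z‖ = |(n:ℝ)| * π›]
  have hu2 : u ^ 2 ≠ 1 := by
    intro h
    have : Complex.exp w₂ = 1 := by
      rw [hw2def, show (4:ℂ) * Complex.I * z = w₁ + w₁ by rw [hw1def]; ring,
        Complex.exp_add, ← hudef, ← sq, h]
    rw [Complex.exp_eq_one_iff] at this
    obtain ⟨n, hn⟩ := this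
    have hz' : z = (n : ℂ) * π / 2 := by
      have h2 : (4 * Complex.I) * z = (4 * Complex.I) * ((n:ℂ) * π / 2) := by
        rw [hw2def] at hn; linear_combination hn
      exact mul_left_cancel₀ (by simp [Complex.I_ne_zero] : (4 * Complex.I) ≠ 0) h2
    have habs' : ‖z‖ = |(n:ℝ)| * π / 2 := by
      rw [hz']
      simp [norm_mul, norm_div, abs_of_pos hpi]
    rcases eq_or_ne n 0 with rfl | hn0
    · apply hz0; rw [hz']; simp
    · have : (1:ℝ) * π ≤ |(n:ℝ)| * π := by
        apply mul_le_mul_of_nonneg_right _ (le_of_lt hpi)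
        rw [← Int.cast_abs]
        exact_mod_cast Int.one_le_abs hn0
      rw [habs'] at hz
      linarith
  have hup1 : u + 1 ≠ 0 := by
    intro h
    apply hu2
    have : u = -1 := by linear_combination h
    rw [this]; ring
  have hum1 : u - 1 ≠ 0 := sub_ne_zero.2 hu1
  -- the two generating function values
  set f₁ : ℂ := ∑' n : ℕ, (bernoulli n : ℂ) * w₁ ^ n / (Nat.factorial n : ℂ) with hf1def
  set f₂ : ℂ := ∑' n : ℕ, (bernoulli n : ℂ) * w₂ ^ n / (Nat.factorial n : ℂ) with hf2def
  have key1 : f₁ * (u - 1) = w₁ := bern_tsum_mul w₁ hw1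
  have key2 : f₂ * (u ^ 2 - 1) = w₂ := by
    have : Complex.exp w₂ = u ^ 2 := by
      rw [hw2def, show (4:ℂ) * Complex.I * z = w₁ + w₁ by rw [hw1def]; ring,
        Complex.exp_add, ← hudef, ← sq]
    have h := bern_tsum_mul w₂ hw2
    rwa [this] at h
  have hdiff : f₁ - f₂ = w₁ / (u + 1) := by
    rw [eq_div_iff hup1]
    have hprod : (u ^ 2 - 1) = (u - 1) * (u + 1) := by ring
    have h1 : f₁ = w₁ / (u - 1) := by rw [eq_div_iff hum1]; exact key1
    have h2 : f₂ = w₂ / ((u - 1) * (u + 1)) := by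
      rw [eq_div_iff (mul_ne_zero hum1 hup1), ← hprod]; exact key2
    rw [h1, h2]
    have hw21 : w₂ = 2 * w₁ := by rw [hw1def, hw2def]; ring
    field_simp
    ring
  -- z tan z + I z = w₁ / (u + 1)
  have hcos : Complex.cos z ≠ 0 := by
    rw [Complex.cos_ne_zero_iff]
    intro k hk
    have habs' : ‖z‖ = |2 * (k:ℝ) + 1| * π / 2 := by
      rw [hk]
      rw [norm_div, norm_mul]
      rw [show ((2:ℂ) * (k:ℂ) + 1) = (((2 * (k:ℝ) + 1) : ℝ) : ℂ) by push_cast; ring,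
        Complex.norm_real]
      simp [abs_of_pos hpi]
    have h1 : (1:ℝ) ≤ |2 * (k:ℝ) + 1| := by
      have hint : (1:ℤ) ≤ |2 * k + 1| := by
        rcases le_or_gt 0 k with h | h
        · calc (1:ℤ) ≤ 2*k+1 := by omega
            _ ≤ |2*k+1| := le_abs_self _
        · calc (1:ℤ) ≤ -(2*k+1) := by omega
            _ ≤ |2*k+1| := neg_le_abs _
      have h2 : ((1:ℤ):ℝ) ≤ ((|2*k+1| : ℤ) : ℝ) := by exact_mod_cast hint
      rw [Int.cast_abs] at h2
      push_cast at h2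
      convert h2 using 1
    rw [habs'] at hz
    nlinarith
  have htan : z * Complex.tan z + Complex.I * z = w₁ / (u + 1) := by
    rw [Complex.tan, eq_div_iff hup1]
    set v : ℂ := Complex.exp (z * Complex.I) with hvdef
    have hv0 : v ≠ 0 := Complex.exp_ne_zero _
    have huv : u = v ^ 2 := by
      rw [hudef, hvdef, ← Complex.exp_nat_mul]
      congr 1
      push_cast
      rw [hw1def]; ring
    have hvinv : Complex.exp (-z * Complex.I) = v⁻¹ := by
      rw [hvdef, ← Complex.exp_neg]; congr 1; ring
    have hsin : Complex.sin z = (v⁻¹ - v) * Complex.I / 2 := by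
      rw [Complex.sin, hvinv, hvdef]
    have hcosv : Complex.cos z = (v + v⁻¹) / 2 := by
      rw [Complex.cos, hvinv, hvdef]
    rw [hsin, hcosv, huv, hw1def]
    have hcv : v + v⁻¹ ≠ 0 := by
      rw [hcosv] at hcos
      intro h; apply hcos; rw [h]; simp
    have hv21 : (1 : ℂ) + v ^ 2 ≠ 0 := by
      intro h; apply hup1; rw [huv]; linear_combination h
    field_simp
    have hv21' : v ^ 2 + 1 ≠ 0 := by rwa [add_comm] at hv21
    rw [mul_add, mul_div_cancel₀ _ hv21']
    ring
  -- the series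
  set a : ℕ → ℂ := fun n => (bernoulli n : ℂ) * (w₁ ^ n - w₂ ^ n) / (Nat.factorial n : ℂ)
    with hadef
  have hs1 : HasSum (fun n => (bernoulli n : ℂ) * w₁ ^ n / (Nat.factorial n : ℂ)) f₁ :=
    (Summable.of_norm (bern_summable w₁ hw1)).hasSum
  have hs2 : HasSum (fun n => (bernoulli n : ℂ) * w₂ ^ n / (Nat.factorial n : ℂ)) f₂ :=
    (Summable.of_norm (bern_summable w₂ hw2)).hasSum
  have hsa : HasSum a (f₁ - f₂) := by
    have := hs1.sub hs2
    convert this using 2 with n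
    · rfl
    rw [hadef]
    ring
  have ha1 : a 1 = Complex.I * z := by
    rw [hadef]
    simp only [pow_one, Nat.factorial_one, Nat.cast_one, div_one, bernoulli_one]
    rw [hw1def, hw2def]
    push_cast
    ring
  have hsa' : HasSum (Function.update a 1 0) (z * Complex.tan z) := by
    have h := hsa.update 1 0
    rw [ha1, hdiff] at h
    convert h using 1
    · rfl
    rw [← htan]
    ring
  have hg : Function.Injective (fun n : ℕ => 2 * (n + 1)) := by
    intro m n h
    simp only [] at h
    omega
  have hvanish : ∀ m, m ∉ Set.range (fun n : ℕ => 2 * (n + 1)) → Function.update a 1 0 m = 0 := by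
    intro m hm
    rcases eq_or_ne m 1 with rfl | hm1
    · simp
    rw [Function.update_of_ne hm1, hadef]
    rcases Nat.even_or_odd m with he | ho
    · obtain ⟨k, hk⟩ := he
      rcases Nat.eq_zero_or_pos k with h0 | h0
      · simp [hk, h0]
      · exfalso
        exact hm ⟨k - 1, by simp only []; omega⟩
    · have hb : bernoulli m = 0 := by
        rw [bernoulli_eq_bernoulli'_of_ne_one hm1]
        apply bernoulli'_eq_zero_of_odd ho
        rcases ho with ⟨k, hk⟩
        omega
      simp [hb]
  have hfinal : HasSum (fun n : ℕ => (-1) ^ (n + 1) * 4 ^ (n + 1) * (1 - 4 ^ (n + 1)) *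
      (bernoulli (2 * (n + 1)) : ℂ) * z ^ (2 * (n + 1)) / (Nat.factorial (2 * (n + 1)) : ℂ))
      (z * Complex.tan z) := by
    have h := (Function.Injective.hasSum_iff hg hvanish).2 hsa'
    convert h using 2 with n
    simp only [Function.comp]
    rw [Function.update_of_ne (by omega : 2 * (n + 1) ≠ 1), hadef]
    dsimp only
    have e1 : w₁ ^ (2 * (n + 1)) = (-4 : ℂ) ^ (n + 1) * z ^ (2 * (n + 1)) := by
      rw [hw1def, pow_mul, show (2 * Complex.I * z) ^ 2 = -4 * z ^ 2 by
        rw [mul_pow, mul_pow, Complex.I_sq]; ring, mul_pow, ← pow_mul]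
    have e2 : w₂ ^ (2 * (n + 1)) = (-16 : ℂ) ^ (n + 1) * z ^ (2 * (n + 1)) := by
      rw [hw2def, pow_mul, show (4 * Complex.I * z) ^ 2 = -16 * z ^ 2 by
        rw [mul_pow, mul_pow, Complex.I_sq]; ring, mul_pow, ← pow_mul]
    rw [e1, e2]
    have e3 : (-4 : ℂ) ^ (n + 1) - (-16 : ℂ) ^ (n + 1)
        = (-1) ^ (n + 1) * 4 ^ (n + 1) * (1 - 4 ^ (n + 1)) := by
      rw [show (-4 : ℂ) = (-1) * 4 by ring, show (-16 : ℂ) = (-1) * (4 * 4) by ring,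
        mul_pow, mul_pow ((-1 : ℂ)) (4 * 4), mul_pow (4:ℂ) 4]
      ring
    rw [← e3]
    ring
  exact hfinal.tsum_eq.symm
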